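/- For all integers d ≥ 3 and n ≥ 4, the domination number of the undirected 3-constrained de Bruijn graph satisfies d(d−1)(d−2)^{n−2}/(2d−3) ≤ γ(cDB(d,3,n)) ≤ (d−1)(d−2)^{n−2}. -/

import Mathlib

/-- A sequence `x` of length `n` over the alphabet `Fin d` is `t`-constrained if
equal symbols occur at positions at distance at least `t`. -/
def dbConstrained (d t n : ℕ) (x : Fin n → Fin d) : Prop :=
  ∀ i j : Fin n, i < j → x i = x j → t ≤ (j : ℕ) - (i : ℕ)

/-- The vertex set `V(d,t,n)` of the `t`-constrained de Bruijn graph: all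
`t`-constrained sequences of length `n` over a `d`-letter alphabet. -/
abbrev dbVtx (d t n : ℕ) : Type := {x : Fin n → Fin d // dbConstrained d t n x}

/-- `dbShift x y` holds when there is a directed de Bruijn edge from `x` to `y`,
i.e. `y` is obtained from `x` by deleting its first symbol and appending a new
last symbol. -/
def dbShift {d t n : ℕ} (x y : dbVtx d t n) : Prop :=
  ∀ (i : Fin n) (h : (i : ℕ) + 1 < n), y.val i = x.val ⟨(i : ℕ) + 1, h⟩

/-- `S` is a dominating set of the directed `t`-constrained de Bruijn graph
`cDB⁺(d,t,n)`: every vertex is dominated by (equal to, or an out-neighbor of)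
some element of `S`. -/
def dbDirDominating {d t n : ℕ} (S : Set (dbVtx d t n)) : Prop :=
  ∀ v : dbVtx d t n, ∃ s ∈ S, s = v ∨ dbShift s v

/-- The domination number `γ(cDB⁺(d,t,n))` of the directed `t`-constrained
de Bruijn graph. -/
noncomputable def gammaDir (d t n : ℕ) : ℕ :=
  sInf {k | ∃ S : Set (dbVtx d t n), S.Finite ∧ S.ncard = k ∧ dbDirDominating S}

/-- Adjacency in the undirected `t`-constrained de Bruijn graph `cDB(d,t,n)`:
edge directions are ignored and loops are removed. -/
def dbAdj {d t n : ℕ} (x y : dbVtx d t n) : Prop :=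
  x ≠ y ∧ (dbShift x y ∨ dbShift y x)

/-- `S` is a dominating set of the undirected graph `cDB(d,t,n)`: every vertex
is dominated by (equal to, or adjacent to) some element of `S`. -/
def dbUndirDominating {d t n : ℕ} (S : Set (dbVtx d t n)) : Prop :=
  ∀ v : dbVtx d t n, ∃ s ∈ S, s = v ∨ dbAdj s v

/-- The domination number `γ(cDB(d,t,n))` of the undirected `t`-constrained
de Bruijn graph. -/
noncomputable def gammaUndir (d t n : ℕ) : ℕ :=
  sInf {k | ∃ S : Set (dbVtx d t n), S.Finite ∧ S.ncard = k ∧ dbUndirDominating S}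


instance {d t n : ℕ} : DecidablePred (dbConstrained d t n) := fun _ => by
  unfold dbConstrained; infer_instance

open Finset

lemma card_ne_two {d : ℕ} (u w : Fin d) (h : u ≠ w) :
    (univ.filter fun a : Fin d => a ≠ u ∧ a ≠ w).card = d - 2 := by
  have : (univ.filter fun a : Fin d => a ≠ u ∧ a ≠ w) = univ \ {u, w} := by
    ext a; simp [and_comm]
  rw [this, card_sdiff_of_subset (by simp)]
  simp [card_insert_of_notMem, h, Fintype.card_fin]

lemma card_ne_one {d : ℕ} (u : Fin d) :
    (univ.filter fun a : Fin d => a ≠ u).card = d - 1 := by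
  have : (univ.filter fun a : Fin d => a ≠ u) = univ \ {u} := by ext a; simp
  rw [this, card_sdiff_of_subset (by simp)]
  simp

lemma snoc_lt {d n : ℕ} (x : Fin n → Fin d) (a : Fin d) (i : Fin (n+1)) (h : (i:ℕ) < n) :
    (Fin.snoc x a : Fin (n+1) → Fin d) i = x ⟨i, h⟩ := by
  have : i = Fin.castSucc ⟨i, h⟩ := by ext; simp
  conv_lhs => rw [this]
  rw [Fin.snoc_castSucc]

lemma snoc_last' {d n : ℕ} (x : Fin n → Fin d) (a : Fin d) (i : Fin (n+1)) (h : (i:ℕ) = n) :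
    (Fin.snoc x a : Fin (n+1) → Fin d) i = a := by
  have : i = Fin.last n := by ext; simpa using h
  rw [this, Fin.snoc_last]


lemma constrained_snoc {d n : ℕ} (hn : 2 ≤ n) (x : Fin n → Fin d) (a : Fin d)
    (u v : Fin n) (hu : (u:ℕ) = n-1) (hv : (v:ℕ) = n-2) :
    dbConstrained d 3 (n+1) (Fin.snoc x a) ↔
      dbConstrained d 3 n x ∧ a ≠ x u ∧ a ≠ x v := by
  constructor
  · intro H
    refine ⟨?_, ?_, ?_⟩
    · intro i j hij he
      have := H (Fin.castSucc i) (Fin.castSucc j) (by simpa using hij)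
        (by rwa [Fin.snoc_castSucc, Fin.snoc_castSucc])
      simpa using this
    · intro he
      have h3 := H (Fin.castSucc u) (Fin.last n) (Fin.castSucc_lt_last u)
        (by rw [Fin.snoc_castSucc, Fin.snoc_last]; exact he.symm)
      simp only [Fin.coe_castSucc, Fin.val_last] at h3
      omega
    · intro he
      have h3 := H (Fin.castSucc v) (Fin.last n) (Fin.castSucc_lt_last v)
        (by rw [Fin.snoc_castSucc, Fin.snoc_last]; exact he.symm)
      simp only [Fin.coe_castSucc, Fin.val_last] at h3
      omega
  · rintro ⟨hc, h1, h2⟩ i j hij he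
    have hi : (i:ℕ) < n := by
      have h' : (i:ℕ) < (j:ℕ) := hij
      have := j.isLt; omega
    rcases lt_or_eq_of_le (Nat.lt_succ_iff.mp j.isLt) with hj | hj
    · rw [snoc_lt x a i hi, snoc_lt x a j hj] at he
      exact hc ⟨i, hi⟩ ⟨j, hj⟩ (by rw [Fin.lt_def]; exact hij) he
    · rw [snoc_lt x a i hi, snoc_last' x a j hj] at he
      rw [hj]
      by_contra hlt
      have hi1 : (i:ℕ) = n-1 ∨ (i:ℕ) = n-2 := by omega
      rcases hi1 with h | h
      · refine h1 ?_
        rw [show (⟨(i:ℕ), hi⟩ : Fin n) = u from Fin.ext (show (i:ℕ) = _ by omega)] at he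
        exact he.symm
      · refine h2 ?_
        rw [show (⟨(i:ℕ), hi⟩ : Fin n) = v from Fin.ext (show (i:ℕ) = _ by omega)] at he
        exact he.symm

/-- constrained length-2 characterization -/
lemma constrained_two {d : ℕ} (x : Fin 2 → Fin d) :
    dbConstrained d 3 2 x ↔ x 0 ≠ x 1 := by
  constructor
  · intro H he
    have := H 0 1 (by decide) he
    simp at this
  · intro h i j hij he
    have hi : (i:ℕ) < 2 := i.isLt
    have hj : (j:ℕ) < 2 := j.isLt
    have h' : (i:ℕ) < (j:ℕ) := hij
    have hi0 : i = 0 := Fin.ext (by omega)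
    have hj1 : j = 1 := Fin.ext (by omega)
    rw [hi0, hj1] at he
    exact absurd he h

def cF (d n : ℕ) (R : Fin d → Prop) [DecidablePred R] : Finset (Fin (n+1) → Fin d) :=
  univ.filter fun x => dbConstrained d 3 (n+1) x ∧ R (x 0)

lemma card_cF_two {d : ℕ} (R : Fin d → Prop) [DecidablePred R] :
    (cF d 1 R).card = (univ.filter R).card * (d-1) := by
  classical
  unfold cF
  rw [card_filter]
  rw [← Equiv.sum_comp (finTwoArrowEquiv (Fin d)).symm
      (fun x => if dbConstrained d 3 2 x ∧ R (x 0) then (1:ℕ) else 0)]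
  have : ∀ p : Fin d × Fin d,
      (if dbConstrained d 3 2 ((finTwoArrowEquiv (Fin d)).symm p) ∧
          R (((finTwoArrowEquiv (Fin d)).symm p) 0) then (1:ℕ) else 0)
      = if (p.1 ≠ p.2 ∧ R p.1) then 1 else 0 := by
    intro p
    congr 1
    rw [constrained_two]
    simp [finTwoArrowEquiv]
  rw [Fintype.sum_congr _ _ this]
  rw [Fintype.sum_prod_type]
  have : ∀ b : Fin d, (∑ c : Fin d, if (b ≠ c ∧ R b) then (1:ℕ) else 0)
      = if R b then d - 1 else 0 := by
    intro b
    by_cases hb : R b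
    · simp only [hb, and_true, if_pos]
      rw [← card_filter]
      have : (univ.filter fun c : Fin d => b ≠ c) = univ.filter fun c => c ≠ b := by
        ext c; simp [ne_comm]
      rw [this, card_ne_one]
    · simp [hb]
  rw [Fintype.sum_congr _ _ this, ← Finset.sum_filter, Finset.sum_const, smul_eq_mul]

lemma snoc_zero' {d n : ℕ} (x : Fin (n+1) → Fin d) (a : Fin d) :
    (Fin.snoc x a : Fin (n+2) → Fin d) 0 = x 0 := by
  rw [snoc_lt x a 0 (by simp)]
  congr 1

lemma card_cF_succ {d n : ℕ} (hd : 3 ≤ d) (hn : 1 ≤ n) (R : Fin d → Prop) [DecidablePred R] :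
    (cF d (n+1) R).card = (cF d n R).card * (d-2) := by
  classical
  have hn2 : 2 ≤ n + 1 := by omega
  set u : Fin (n+1) := ⟨n, by omega⟩ with hu
  set v : Fin (n+1) := ⟨n-1, by omega⟩ with hv
  have huv : ∀ x : Fin (n+1) → Fin d, dbConstrained d 3 (n+1) x → x u ≠ x v := by
    intro x hx he
    have hvu : v < u := by rw [Fin.lt_def]; simp [hu, hv]; omega
    have := hx v u hvu he.symm
    simp [hu, hv] at this; omega
  unfold cF
  rw [card_filter, card_filter]
  rw [← Equiv.sum_comp (Fin.snocEquiv (fun _ : Fin (n+2) => Fin d))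
      (fun x => if dbConstrained d 3 (n+2) x ∧ R (x 0) then (1:ℕ) else 0)]
  rw [Fintype.sum_prod_type]
  rw [Finset.sum_comm]
  have key : ∀ x : Fin (n+1) → Fin d,
      (∑ a : Fin d, if dbConstrained d 3 (n+2)
          ((Fin.snocEquiv (fun _ : Fin (n+2) => Fin d)) (a, x)) ∧
          R (((Fin.snocEquiv (fun _ : Fin (n+2) => Fin d)) (a, x)) 0) then (1:ℕ) else 0)
      = (if dbConstrained d 3 (n+1) x ∧ R (x 0) then (1:ℕ) else 0) * (d-2) := by
    intro x
    have hsnoc : ∀ a : Fin d,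
        ((Fin.snocEquiv (fun _ : Fin (n+2) => Fin d)) (a, x)) = Fin.snoc x a := fun a => rfl
    have hcond : ∀ a : Fin d,
        (dbConstrained d 3 (n+2) (Fin.snoc x a) ∧ R ((Fin.snoc x a : Fin (n+2) → Fin d) 0))
        ↔ ((dbConstrained d 3 (n+1) x ∧ R (x 0)) ∧ (a ≠ x u ∧ a ≠ x v)) := by
      intro a
      rw [snoc_zero' x a,
        constrained_snoc hn2 x a u v (by simp [hu]) (by simp [hv])]
      tauto
    simp only [hsnoc]
    by_cases hx : dbConstrained d 3 (n+1) x ∧ R (x 0)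
    · have : ∀ a : Fin d,
          (if dbConstrained d 3 (n+2) (Fin.snoc x a) ∧
              R ((Fin.snoc x a : Fin (n+2) → Fin d) 0) then (1:ℕ) else 0)
          = if (a ≠ x u ∧ a ≠ x v) then 1 else 0 := by
        intro a
        exact if_congr ((hcond a).trans (and_iff_right hx)) rfl rfl
      rw [Fintype.sum_congr _ _ this, ← card_filter, card_ne_two _ _ (huv x hx.1), if_pos hx,
        one_mul]
    · have : ∀ a : Fin d,
          (if dbConstrained d 3 (n+2) (Fin.snoc x a) ∧
              R ((Fin.snoc x a : Fin (n+2) → Fin d) 0) then (1:ℕ) else 0) = 0 := by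
        intro a; rw [if_neg]; rw [hcond a]; tauto
      rw [Fintype.sum_congr _ _ this, if_neg hx, zero_mul, Finset.sum_const, smul_zero]
  rw [Fintype.sum_congr _ _ key, ← Finset.sum_mul]

instance {d t n : ℕ} (x y : dbVtx d t n) : Decidable (dbShift x y) := by
  unfold dbShift; infer_instance

-- induction count lemma
lemma card_cF {d : ℕ} (hd : 3 ≤ d) (R : Fin d → Prop) [DecidablePred R] :
    ∀ n, 1 ≤ n → (cF d n R).card = (univ.filter R).card * (d-1) * (d-2)^(n-1) := by
  intro n hn
  induction n, hn using Nat.le_induction with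
  | base => simpa using card_cF_two R
  | succ n hn ih =>
      rw [card_cF_succ hd hn R, ih]
      have : n + 1 - 1 = (n-1) + 1 := by omega
      rw [this, pow_succ]
      ring

lemma exists_avoid {d : ℕ} (hd : 3 ≤ d) (u w : Fin d) (hne : u ≠ w) :
    ∃ a : Fin d, a ≠ u ∧ a ≠ w := by
  have hpos : 0 < (univ.filter fun a : Fin d => a ≠ u ∧ a ≠ w).card := by
    rw [card_ne_two u w hne]; omega
  obtain ⟨a, ha⟩ := Finset.card_pos.mp hpos
  exact ⟨a, (mem_filter.mp ha).2⟩

set_option maxHeartbeats 2000000 in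
lemma dominating_upper {d m : ℕ} (hd : 3 ≤ d) (hm : 2 ≤ m) (c0 : Fin d) :
    dbUndirDominating {x : dbVtx d 3 (m+2) | x.val 0 = c0} := by
  rintro ⟨f, hf⟩
  by_cases h0 : f 0 = c0
  · exact ⟨⟨f, hf⟩, h0, Or.inl rfl⟩
  by_cases h1 : f 1 = c0
  · -- append case: v shifts to s
    have hne : f ⟨m+1, by omega⟩ ≠ f ⟨m, by omega⟩ := by
      intro he
      have := hf ⟨m, by omega⟩ ⟨m+1, by omega⟩ (by rw [Fin.lt_def]; simp) he.symm
      simp at this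
    obtain ⟨a, ha1, ha2⟩ := exists_avoid hd _ _ hne
    set g : Fin (m+2) → Fin d :=
      fun i => if h : (i:ℕ)+1 < m+2 then f ⟨(i:ℕ)+1, h⟩ else a with hg
    have hgc : dbConstrained d 3 (m+2) g := by
      intro i j hij he
      have hij' : (i:ℕ) < (j:ℕ) := hij
      have hi : (i:ℕ)+1 < m+2 := by have := j.isLt; omega
      have hgi : g i = f ⟨(i:ℕ)+1, hi⟩ := dif_pos hi
      by_cases hj : (j:ℕ)+1 < m+2
      · have hgj : g j = f ⟨(j:ℕ)+1, hj⟩ := dif_pos hj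
        rw [hgi, hgj] at he
        have := hf ⟨(i:ℕ)+1, hi⟩ ⟨(j:ℕ)+1, hj⟩ (by rw [Fin.lt_def]; simp; omega) he
        simp at this
        omega
      · have hgj : g j = a := dif_neg hj
        by_contra hlt
        have hc : (i:ℕ)+1 = m+1 ∨ (i:ℕ)+1 = m := by have := j.isLt; omega
        rcases hc with hc | hc
        · refine ha1 ?_
          rw [← hgj, ← he, hgi]
          congr 1
          exact Fin.ext (by simp [hc])
        · refine ha2 ?_
          rw [← hgj, ← he, hgi]
          congr 1
          exact Fin.ext (by simp [hc])
    have h01 : ((0:Fin (m+2)):ℕ)+1 < m+2 := by simp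
    have hg0 : g 0 = c0 := by
      have : g 0 = f ⟨((0:Fin (m+2)):ℕ)+1, h01⟩ := dif_pos h01
      rw [this, show (⟨((0:Fin (m+2)):ℕ)+1, h01⟩ : Fin (m+2)) = 1 from Fin.ext (by simp)]
      exact h1
    refine ⟨⟨g, hgc⟩, hg0, Or.inr ⟨?_, Or.inr ?_⟩⟩
    · intro hEq
      apply h0
      have := congrArg (fun z : dbVtx d 3 (m+2) => z.val 0) hEq
      simp only at this
      rw [← this, hg0]
    · intro i h
      show g i = f ⟨(i:ℕ)+1, h⟩
      exact dif_pos h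
  · -- prepend case: s shifts to v
    set g : Fin (m+2) → Fin d :=
      fun i => if h : (i:ℕ) = 0 then c0 else f ⟨(i:ℕ)-1, by omega⟩ with hg
    have hgc : dbConstrained d 3 (m+2) g := by
      intro i j hij he
      have hij' : (i:ℕ) < (j:ℕ) := hij
      have hj0 : ¬ ((j:ℕ) = 0) := by omega
      have hgj : g j = f ⟨(j:ℕ)-1, by omega⟩ := dif_neg hj0
      by_cases hi : (i:ℕ) = 0
      · have hgi : g i = c0 := dif_pos hi
        by_contra hlt
        have hc : (j:ℕ)-1 = 0 ∨ (j:ℕ)-1 = 1 := by omega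
        rcases hc with hc | hc
        · refine h0 ?_
          rw [show (0 : Fin (m+2)) = ⟨(j:ℕ)-1, by omega⟩ from Fin.ext (by simp [hc])]
          rw [← hgj, ← he, hgi]
        · refine h1 ?_
          rw [show (1 : Fin (m+2)) = ⟨(j:ℕ)-1, by omega⟩ from Fin.ext (by simp [hc])]
          rw [← hgj, ← he, hgi]
      · have hgi : g i = f ⟨(i:ℕ)-1, by omega⟩ := dif_neg hi
        rw [hgi, hgj] at he
        have := hf _ _ (show (⟨(i:ℕ)-1, by omega⟩ : Fin (m+2)) < ⟨(j:ℕ)-1, by omega⟩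
          by rw [Fin.lt_def]; simp; omega) he
        simp at this
        omega
    have hg0 : g 0 = c0 := dif_pos (by simp)
    refine ⟨⟨g, hgc⟩, hg0, Or.inr ⟨?_, Or.inl ?_⟩⟩
    · intro hEq
      apply h0
      have := congrArg (fun z : dbVtx d 3 (m+2) => z.val 0) hEq
      simp only at this
      rw [← this, hg0]
    · intro i h
      show f i = g ⟨(i:ℕ)+1, h⟩
      have hne0 : ¬ (((⟨(i:ℕ)+1, h⟩ : Fin (m+2)) : ℕ) = 0) := by simp
      rw [show g ⟨(i:ℕ)+1, h⟩ = f ⟨(i:ℕ)+1-1, by omega⟩ from dif_neg hne0]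
      congr 1

set_option maxHeartbeats 1000000 in
lemma dom_card_bound {d m : ℕ} (hd : 3 ≤ d) (hm : 2 ≤ m) (S : Set (dbVtx d 3 (m+2)))
    (hfin : S.Finite) (hdom : dbUndirDominating S) :
    Fintype.card (dbVtx d 3 (m+2)) ≤ S.ncard * (2*d-3) := by
  classical
  set D : dbVtx d 3 (m+2) → Finset (dbVtx d 3 (m+2)) :=
    fun s => univ.filter (fun v => s = v ∨ dbShift s v ∨ dbShift v s) with hD
  have hsub : (univ : Finset (dbVtx d 3 (m+2))) ⊆ hfin.toFinset.biUnion D := by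
    intro v _
    obtain ⟨s, hsS, hcase⟩ := hdom v
    refine mem_biUnion.mpr ⟨s, hfin.mem_toFinset.mpr hsS, mem_filter.mpr ⟨mem_univ _, ?_⟩⟩
    rcases hcase with h | ⟨_, h⟩
    · exact Or.inl h
    · exact Or.inr h
  have hDcard : ∀ s : dbVtx d 3 (m+2), (D s).card ≤ 2*d-3 := by
    intro s
    obtain ⟨sf, hsf⟩ := s
    have p1 : m < m + 2 := by omega
    have p2 : m + 1 < m + 2 := by omega
    have p3 : m - 1 < m + 2 := by omega
    have p0 : 0 < m + 2 := by omega
    have p1' : 1 < m + 2 := by omega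
    have p2' : 2 < m + 2 := by omega
    set out : Finset (dbVtx d 3 (m+2)) :=
      univ.filter (fun v => dbShift ⟨sf, hsf⟩ v) with hout
    set inn : Finset (dbVtx d 3 (m+2)) :=
      univ.filter (fun v => dbShift v ⟨sf, hsf⟩) with hinn
    have houtcard : out.card ≤ d - 2 := by
      have hne : sf ⟨m+1, p2⟩ ≠ sf ⟨m, p1⟩ := by
        intro he
        have := hsf ⟨m, p1⟩ ⟨m+1, p2⟩ (by rw [Fin.lt_def]; simp) he.symm
        simp at this
      refine Finset.card_le_card_of_injOn (fun v => v.val ⟨m+1, p2⟩)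
        ?_ ?_ |>.trans (le_of_eq (card_ne_two _ _ hne))
      · rintro ⟨vf, hvf⟩ hv
        have hsh : dbShift ⟨sf, hsf⟩ ⟨vf, hvf⟩ := (mem_filter.mp hv).2
        have e1 : vf ⟨m, p1⟩ = sf ⟨m+1, p2⟩ := hsh ⟨m, p1⟩ p2
        have e2 : vf ⟨m-1, p3⟩ = sf ⟨m, p1⟩ :=
          (hsh ⟨m-1, p3⟩ (show m-1+1 < m+2 by omega)).trans
            (congrArg sf (Fin.ext (show m-1+1 = m by omega)))
        simp only [mem_coe, mem_filter, mem_univ, true_and]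
        constructor
        · intro he
          rw [← e1] at he
          have := hvf ⟨m, p1⟩ ⟨m+1, p2⟩ (by rw [Fin.lt_def]; simp) he.symm
          simp at this
        · intro he
          rw [← e2] at he
          have := hvf ⟨m-1, p3⟩ ⟨m+1, p2⟩ (by rw [Fin.lt_def]; simp) he.symm
          simp at this; omega
      · rintro ⟨vf, hvf⟩ hv ⟨wf, hwf⟩ hw heq
        simp only at heq
        have hshv : dbShift ⟨sf, hsf⟩ ⟨vf, hvf⟩ := (mem_filter.mp hv).2
        have hshw : dbShift ⟨sf, hsf⟩ ⟨wf, hwf⟩ := (mem_filter.mp hw).2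
        refine Subtype.ext (funext fun i => ?_)
        by_cases hi : (i:ℕ) + 1 < m + 2
        · rw [hshv i hi, hshw i hi]
        · have : i = ⟨m+1, p2⟩ := Fin.ext (by have := i.isLt; simp; omega)
          rw [this]; exact heq
    have hinncard : inn.card ≤ d - 2 := by
      have hne : sf ⟨0, p0⟩ ≠ sf ⟨1, p1'⟩ := by
        intro he
        have := hsf ⟨0, p0⟩ ⟨1, p1'⟩ (by rw [Fin.lt_def]; simp) he
        simp at this
      refine Finset.card_le_card_of_injOn (fun v => v.val ⟨0, p0⟩)
        ?_ ?_ |>.trans (le_of_eq (card_ne_two _ _ hne))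
      · rintro ⟨vf, hvf⟩ hv
        have hsh : dbShift ⟨vf, hvf⟩ ⟨sf, hsf⟩ := (mem_filter.mp hv).2
        have e1 : sf ⟨0, p0⟩ = vf ⟨1, p1'⟩ :=
          (hsh ⟨0, p0⟩ (show 0+1 < m+2 by omega)).trans
            (congrArg vf (Fin.ext (show 0+1 = 1 by omega)))
        have e2 : sf ⟨1, p1'⟩ = vf ⟨2, p2'⟩ :=
          (hsh ⟨1, p1'⟩ (show 1+1 < m+2 by omega)).trans
            (congrArg vf (Fin.ext (show 1+1 = 2 by omega)))
        simp only [mem_coe, mem_filter, mem_univ, true_and]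
        constructor
        · intro he
          rw [e1] at he
          have := hvf ⟨0, p0⟩ ⟨1, p1'⟩ (by rw [Fin.lt_def]; simp) he
          simp at this
        · intro he
          rw [e2] at he
          have := hvf ⟨0, p0⟩ ⟨2, p2'⟩ (by rw [Fin.lt_def]; simp) he
          simp at this
      · rintro ⟨vf, hvf⟩ hv ⟨wf, hwf⟩ hw heq
        simp only at heq
        have hshv : dbShift ⟨vf, hvf⟩ ⟨sf, hsf⟩ := (mem_filter.mp hv).2
        have hshw : dbShift ⟨wf, hwf⟩ ⟨sf, hsf⟩ := (mem_filter.mp hw).2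
        refine Subtype.ext (funext fun i => ?_)
        by_cases hi : (i:ℕ) = 0
        · have : i = ⟨0, p0⟩ := Fin.ext (by simp [hi])
          rw [this]; exact heq
        · have hilt : (i:ℕ) - 1 + 1 < m + 2 := by have := i.isLt; omega
          have hv' := hshv ⟨(i:ℕ)-1, by omega⟩ hilt
          have hw' := hshw ⟨(i:ℕ)-1, by omega⟩ hilt
          have hieq : (⟨(i:ℕ)-1+1, hilt⟩ : Fin (m+2)) = i := Fin.ext (by simp; omega)
          rw [hieq] at hv' hw'
          rw [← hv', ← hw']
    have hDsub : D ⟨sf, hsf⟩ ⊆ insert ⟨sf, hsf⟩ (out ∪ inn) := by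
      intro v hv
      have := (mem_filter.mp hv).2
      rcases this with h | h | h
      · exact mem_insert.mpr (Or.inl h.symm)
      · exact mem_insert.mpr (Or.inr (mem_union_left _ (mem_filter.mpr ⟨mem_univ _, h⟩)))
      · exact mem_insert.mpr (Or.inr (mem_union_right _ (mem_filter.mpr ⟨mem_univ _, h⟩)))
    calc (D ⟨sf, hsf⟩).card ≤ (insert ⟨sf, hsf⟩ (out ∪ inn)).card := card_le_card hDsub
      _ ≤ (out ∪ inn).card + 1 := card_insert_le _ _
      _ ≤ (out.card + inn.card) + 1 := by
          exact Nat.add_le_add_right (card_union_le _ _) 1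
      _ ≤ ((d-2) + (d-2)) + 1 := by
          exact Nat.add_le_add_right (Nat.add_le_add houtcard hinncard) 1
      _ ≤ 2*d-3 := by omega
  calc Fintype.card (dbVtx d 3 (m+2)) = (univ : Finset (dbVtx d 3 (m+2))).card :=
        Finset.card_univ.symm
    _ ≤ (hfin.toFinset.biUnion D).card := card_le_card hsub
    _ ≤ ∑ s ∈ hfin.toFinset, (D s).card := card_biUnion_le
    _ ≤ ∑ _s ∈ hfin.toFinset, (2*d-3) := Finset.sum_le_sum (fun s _ => hDcard s)
    _ = hfin.toFinset.card * (2*d-3) := by rw [Finset.sum_const, smul_eq_mul]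
    _ = S.ncard * (2*d-3) := by rw [Set.ncard_eq_toFinset_card S hfin]

lemma fintype_card_vtx {d m : ℕ} (hd : 3 ≤ d) :
    Fintype.card (dbVtx d 3 (m+2)) = d * (d-1) * (d-2)^m := by
  classical
  rw [Fintype.card_subtype]
  have h1 : (univ.filter (dbConstrained d 3 (m+2))) = cF d (m+1) (fun _ => True) := by
    unfold cF; ext x; simp
  rw [h1, card_cF hd (fun _ => True) (m+1) (by omega)]
  simp [Finset.filter_true]

lemma ncard_first_fixed {d m : ℕ} (hd : 3 ≤ d) (c0 : Fin d) :
    ({x : dbVtx d 3 (m+2) | x.val 0 = c0}).ncard = (d-1) * (d-2)^m := by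
  classical
  rw [← Nat.card_coe_set_eq]
  have e : {x : dbVtx d 3 (m+2) | x.val 0 = c0} ≃
      {y : Fin (m+2) → Fin d // dbConstrained d 3 (m+2) y ∧ y 0 = c0} :=
    { toFun := fun p => ⟨p.1.1, p.1.2, p.2⟩
      invFun := fun q => ⟨⟨q.1, q.2.1⟩, q.2.2⟩
      left_inv := fun p => rfl
      right_inv := fun q => rfl }
  rw [Nat.card_congr e, Nat.card_eq_fintype_card, Fintype.card_subtype]
  have h1 : (univ.filter fun y : Fin (m+2) → Fin d =>
      dbConstrained d 3 (m+2) y ∧ y 0 = c0) = cF d (m+1) (fun b => b = c0) := by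
    unfold cF; ext x; simp
  rw [h1, card_cF hd _ (m+1) (by omega)]
  have h2 : (univ.filter fun b : Fin d => b = c0) = {c0} := by
    ext b; simp
  rw [h2]
  simp


/-- `d(d-1)(d-2)^(n-2)/(2d-3) ≤ γ(cDB(d,3,n)) ≤ (d-1)(d-2)^(n-2)`. -/
theorem gammaUndir_three_bounds (d n : ℕ) (hd : 3 ≤ d) (hn : 4 ≤ n) :
    (d : ℚ) * ((d : ℚ) - 1) * ((d : ℚ) - 2) ^ (n - 2) / (2 * (d : ℚ) - 3)
      ≤ (gammaUndir d 3 n : ℚ) ∧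
    gammaUndir d 3 n ≤ (d - 1) * (d - 2) ^ (n - 2) := by
  obtain ⟨m, hm, rfl⟩ : ∃ m, 2 ≤ m ∧ n = m + 2 := ⟨n - 2, by omega, by omega⟩
  have hex : m + 2 - 2 = m := rfl
  set c0 : Fin d := ⟨0, by omega⟩ with hc0
  set S : Set (dbVtx d 3 (m+2)) := {x | x.val 0 = c0} with hS
  have hfin : S.Finite := Set.toFinite _
  have hncard : S.ncard = (d-1) * (d-2)^m := ncard_first_fixed hd c0
  have hdom : dbUndirDominating S := dominating_upper hd hm c0
  have hub : gammaUndir d 3 (m+2) ≤ (d-1) * (d-2)^m :=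
    Nat.sInf_le ⟨S, hfin, hncard, hdom⟩
  have hnonempty : {k | ∃ S : Set (dbVtx d 3 (m+2)),
      S.Finite ∧ S.ncard = k ∧ dbUndirDominating S}.Nonempty :=
    ⟨S.ncard, S, hfin, rfl, hdom⟩
  obtain ⟨S', hfin', hcard', hdom'⟩ := Nat.sInf_mem hnonempty
  have hlow : d * (d-1) * (d-2)^m ≤ gammaUndir d 3 (m+2) * (2*d-3) := by
    have h := dom_card_bound hd hm S' hfin' hdom'
    rw [fintype_card_vtx hd, hcard'] at h
    exact h
  constructor
  · have hpos : (0:ℚ) < 2 * (d:ℚ) - 3 := by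
      have : (3:ℚ) ≤ (d:ℚ) := by exact_mod_cast hd
      linarith
    rw [div_le_iff₀ hpos, hex]
    have h1 : ((d-1:ℕ):ℚ) = (d:ℚ) - 1 := by
      rw [Nat.cast_sub (by omega)]; norm_num
    have h2 : ((d-2:ℕ):ℚ) = (d:ℚ) - 2 := by
      rw [Nat.cast_sub (by omega)]; norm_num
    have h3 : ((2*d-3:ℕ):ℚ) = 2*(d:ℚ) - 3 := by
      rw [Nat.cast_sub (by omega)]; push_cast; ring
    rw [← h1, ← h2, ← h3]
    exact_mod_cast hlow
  · rw [hex]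
    exact hub
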